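/- Suppose each f_i : ℝ^d → ℝ is convex and L-smooth, i = 1,…,n. Let x₁,…,x_n, q₁,…,q_n ∈ ℝ^d, set x̄ = (1/n)∑ x_i, q̄ = (1/n)∑ q_i, d̄ = (1/n)∑ ∇f_i(x_i), f = (1/n)∑ f_i, and let u ∈ ℝ^d be any point with u = q̄. Then ∑_{i=1}^n ‖∇f_i(x_i) − ∇f_i(q_i)‖² ≤ 4Ln(f(u) − f(x̄) − ⟨d̄, u − x̄⟩) + 2L²(∑_{i=1}^n ‖x_i − x̄‖² + ∑_{i=1}^n ‖q_i − q̄‖²). -/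

import Mathlib

variable {F : Type*} [NormedAddCommGroup F] [InnerProductSpace ℝ F] [CompleteSpace F]

lemma conv_grad_le {f : F → ℝ} (hdiff : Differentiable ℝ f)
    (hconv : ConvexOn ℝ Set.univ f) (x y : F) :
    f x + (inner ℝ (gradient f x) (y - x) : ℝ) ≤ f y := by
  set g : ℝ → ℝ := fun t => f (x + t • (y - x)) with hg
  have hc : HasDerivAt (fun t : ℝ => x + t • (y - x)) (y - x) 0 := by
    simpa using ((hasDerivAt_id (0 : ℝ)).smul_const (y - x)).const_add x
  have hfd : HasFDerivAt f ((InnerProductSpace.toDual ℝ F) (gradient f x)) x :=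
    hasGradientAt_iff_hasFDerivAt.mp (hdiff x).hasGradientAt
  have h0 : x + (0 : ℝ) • (y - x) = x := by simp
  have hgd : HasDerivAt g (inner ℝ (gradient f x) (y - x) : ℝ) 0 := by
    have hfd' : HasFDerivAt f ((InnerProductSpace.toDual ℝ F) (gradient f x))
        ((fun t : ℝ => x + t • (y - x)) 0) := by simpa using hfd
    have := HasFDerivAt.comp_hasDerivAt (0 : ℝ) hfd' hc
    rw [InnerProductSpace.toDual_apply_apply] at this
    exact this
  have hconvg : ConvexOn ℝ Set.univ g := by
    have h := hconv.comp_affineMap (AffineMap.lineMap x y)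
    have heq : (f ∘ (AffineMap.lineMap x y)) = g := by
      funext t
      simp [g, AffineMap.lineMap_apply]
      congr 1
      module
    rw [heq] at h
    simpa using h
  have hslope := hconvg.le_slope_of_hasDerivAt (Set.mem_univ 0) (Set.mem_univ 1)
    zero_lt_one hgd
  have : slope g 0 1 = f y - f x := by
    simp [slope_def_field, g]
  rw [this] at hslope
  linarith

lemma cocoercive {f : F → ℝ} {L : ℝ} (hL : 0 < L) (hdiff : Differentiable ℝ f)
    (hconv : ConvexOn ℝ Set.univ f)
    (hsmooth : ∀ a b, f a ≤ f b + (inner ℝ (gradient f b) (a - b) : ℝ) + L / 2 * ‖a - b‖ ^ 2)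
    (x y : F) :
    ‖gradient f y - gradient f x‖ ^ 2 ≤
      2 * L * (f y - f x - (inner ℝ (gradient f x) (y - x) : ℝ)) := by
  set g : F := gradient f y - gradient f x with hgdef
  set z : F := y - (1 / L) • g with hz
  have h1 := conv_grad_le hdiff hconv x z
  have h2 := hsmooth z y
  have hzy : z - y = -((1 / L) • g) := by rw [hz]; abel
  have hzx : z - x = (y - x) - (1 / L) • g := by rw [hz]; abel
  have e1 : (inner ℝ (gradient f x) (z - x) : ℝ)
      = (inner ℝ (gradient f x) (y - x) : ℝ) - (1 / L) * (inner ℝ (gradient f x) g : ℝ) := by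
    rw [hzx, inner_sub_right, real_inner_smul_right]
  have e2 : (inner ℝ (gradient f y) (z - y) : ℝ) = -((1 / L) * (inner ℝ (gradient f y) g : ℝ)) := by
    rw [hzy, inner_neg_right, real_inner_smul_right]
  have e3 : ‖z - y‖ ^ 2 = (1 / L) ^ 2 * ‖g‖ ^ 2 := by
    rw [hzy, norm_neg, norm_smul]
    simp [abs_of_pos (by positivity : (0:ℝ) < 1 / L), mul_pow]
  have e4 : (inner ℝ (gradient f y) g : ℝ) - (inner ℝ (gradient f x) g : ℝ) = ‖g‖ ^ 2 := by
    rw [← inner_sub_left, ← hgdef, real_inner_self_eq_norm_sq]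
  rw [e1] at h1
  rw [e2, e3] at h2
  have hL' : L ≠ 0 := ne_of_gt hL
  have h3 := h1.trans h2
  have h4 := mul_le_mul_of_nonneg_left h3 (by positivity : (0:ℝ) ≤ 2 * L)
  have e4' : 2 * L * (inner ℝ (gradient f y) g : ℝ) - 2 * L * (inner ℝ (gradient f x) g : ℝ)
      = 2 * L * ‖g‖ ^ 2 := by rw [← mul_sub, e4]
  have hc1 : 2 * L * (1 / L) = 2 := by field_simp
  have hc2 : 2 * L * (L / 2 * ((1 / L) ^ 2 * ‖g‖ ^ 2)) = ‖g‖ ^ 2 := by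
    field_simp
  nlinarith [h4, e4', hc1, hc2, mul_le_mul_of_nonneg_left h3 hL.le]

lemma grad_lip_sq {f : F → ℝ} {L : ℝ} (hL : 0 < L) (hdiff : Differentiable ℝ f)
    (hconv : ConvexOn ℝ Set.univ f)
    (hsmooth : ∀ a b, f a ≤ f b + (inner ℝ (gradient f b) (a - b) : ℝ) + L / 2 * ‖a - b‖ ^ 2)
    (x y : F) :
    ‖gradient f y - gradient f x‖ ^ 2 ≤ L ^ 2 * ‖y - x‖ ^ 2 := by
  have h1 := cocoercive hL hdiff hconv hsmooth x y
  have h2 := cocoercive hL hdiff hconv hsmooth y x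
  have e : (inner ℝ (gradient f x) (y - x) : ℝ) + (inner ℝ (gradient f y) (x - y) : ℝ)
      = -(inner ℝ (gradient f y - gradient f x) (y - x) : ℝ) := by
    have : x - y = -(y - x) := by abel
    rw [this, inner_neg_right, inner_sub_left]; ring
  have hsum : ‖gradient f y - gradient f x‖ ^ 2
      ≤ L * (inner ℝ (gradient f y - gradient f x) (y - x) : ℝ) := by
    have h2' : ‖gradient f x - gradient f y‖ ^ 2 = ‖gradient f y - gradient f x‖ ^ 2 := by
      rw [norm_sub_rev]
    rw [h2'] at h2
    nlinarith [h1, h2, e]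
  have hcs := real_inner_le_norm (gradient f y - gradient f x) (y - x)
  set a := ‖gradient f y - gradient f x‖
  set b := ‖y - x‖
  have ha : 0 ≤ a := norm_nonneg _
  have hb : 0 ≤ b := norm_nonneg _
  have key : a ^ 2 ≤ L * (a * b) := by
    calc a ^ 2 ≤ L * (inner ℝ (gradient f y - gradient f x) (y - x) : ℝ) := hsum
    _ ≤ L * (a * b) := by nlinarith [hcs]
  rcases eq_or_lt_of_le ha with h | h
  · have h0 : (0:ℝ) ≤ L ^ 2 * b ^ 2 := by positivity
    rw [← h]
    simpa using h0
  · have hab : a ≤ L * b := by nlinarith [key, h]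
    nlinarith [hab, ha, hb]

/-- Bound on the gradient difference: for convex L-smooth f_i, points x_i, q_i,
u = q̄ = (1/n)∑ q_i, x̄ = (1/n)∑ x_i, d̄ = (1/n)∑ ∇f_i(x_i), f = (1/n)∑ f_i:
∑‖∇f_i(x_i) − ∇f_i(q_i)‖² ≤ 4Ln(f(u) − f(x̄) − ⟨d̄, u − x̄⟩)
  + 2L²(∑‖x_i − x̄‖² + ∑‖q_i − q̄‖²). -/
theorem stmt9 {d n : ℕ} (hn : 0 < n) (L : ℝ) (hL : 0 < L)
    (fs : Fin n → EuclideanSpace ℝ (Fin d) → ℝ)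
    (hdiff : ∀ i, Differentiable ℝ (fs i))
    (hconv : ∀ i, ConvexOn ℝ Set.univ (fs i))
    (hsmooth : ∀ i x y, fs i x ≤
      fs i y + (inner ℝ (gradient (fs i) y) (x - y) : ℝ) + L / 2 * ‖x - y‖ ^ 2)
    (x q : Fin n → EuclideanSpace ℝ (Fin d)) (u : EuclideanSpace ℝ (Fin d))
    (hu : u = (1 / (n : ℝ)) • ∑ i, q i) :
    ∑ i, ‖gradient (fs i) (x i) - gradient (fs i) (q i)‖ ^ 2 ≤
      4 * L * n * ((1 / (n : ℝ)) * ∑ i, fs i u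
          - (1 / (n : ℝ)) * ∑ i, fs i ((1 / (n : ℝ)) • ∑ j, x j)
          - (inner ℝ ((1 / (n : ℝ)) • ∑ i, gradient (fs i) (x i))
              (u - (1 / (n : ℝ)) • ∑ j, x j) : ℝ))
        + 2 * L ^ 2 * (∑ i, ‖x i - (1 / (n : ℝ)) • ∑ j, x j‖ ^ 2
            + ∑ i, ‖q i - (1 / (n : ℝ)) • ∑ j, q j‖ ^ 2) := by
  have hn' : (n : ℝ) ≠ 0 := Nat.cast_ne_zero.mpr hn.ne'
  rw [← hu]
  set xb : EuclideanSpace ℝ (Fin d) := (1 / (n : ℝ)) • ∑ j, x j with hxb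
  have key : ∀ i, ‖gradient (fs i) (x i) - gradient (fs i) (q i)‖ ^ 2 ≤
      4 * L * (fs i u - fs i xb - (inner ℝ (gradient (fs i) (x i)) (u - xb) : ℝ))
        + 2 * L ^ 2 * ‖x i - xb‖ ^ 2 + 2 * L ^ 2 * ‖q i - u‖ ^ 2 := by
    intro i
    have ha2 : ‖gradient (fs i) u - gradient (fs i) (x i)‖ ^ 2 ≤
        2 * L * (fs i u - fs i (x i) - (inner ℝ (gradient (fs i) (x i)) (u - x i) : ℝ)) :=
      cocoercive hL (hdiff i) (hconv i) (hsmooth i) (x i) u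
    have hb2 : ‖gradient (fs i) u - gradient (fs i) (q i)‖ ^ 2 ≤
        L ^ 2 * ‖u - q i‖ ^ 2 :=
      grad_lip_sq hL (hdiff i) (hconv i) (hsmooth i) (q i) u
    have hsm := hsmooth i xb (x i)
    have hinner : (inner ℝ (gradient (fs i) (x i)) (u - x i) : ℝ)
        = (inner ℝ (gradient (fs i) (x i)) (u - xb) : ℝ)
          + (inner ℝ (gradient (fs i) (x i)) (xb - x i) : ℝ) := by
      rw [← inner_add_right]
      congr 1
      abel
    have hdecomp : gradient (fs i) (x i) - gradient (fs i) (q i)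
        = (gradient (fs i) (x i) - gradient (fs i) u)
          + (gradient (fs i) u - gradient (fs i) (q i)) := by abel
    have htri : ‖gradient (fs i) (x i) - gradient (fs i) (q i)‖ ^ 2 ≤
        2 * ‖gradient (fs i) (x i) - gradient (fs i) u‖ ^ 2
          + 2 * ‖gradient (fs i) u - gradient (fs i) (q i)‖ ^ 2 := by
      rw [hdecomp]
      have h := norm_add_le (gradient (fs i) (x i) - gradient (fs i) u)
        (gradient (fs i) u - gradient (fs i) (q i))
      nlinarith [norm_nonneg (gradient (fs i) (x i) - gradient (fs i) u),
        norm_nonneg (gradient (fs i) u - gradient (fs i) (q i)),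
        norm_nonneg ((gradient (fs i) (x i) - gradient (fs i) u)
          + (gradient (fs i) u - gradient (fs i) (q i))),
        sq_nonneg (‖gradient (fs i) (x i) - gradient (fs i) u‖
          - ‖gradient (fs i) u - gradient (fs i) (q i)‖)]
    have hrev1 : ‖gradient (fs i) (x i) - gradient (fs i) u‖
        = ‖gradient (fs i) u - gradient (fs i) (x i)‖ := norm_sub_rev _ _
    have hrev2 : ‖u - q i‖ = ‖q i - u‖ := norm_sub_rev _ _
    have hrev3 : ‖xb - x i‖ = ‖x i - xb‖ := norm_sub_rev _ _
    rw [hrev1] at htri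
    rw [hrev2] at hb2
    rw [hrev3] at hsm
    rw [hinner] at ha2
    nlinarith [htri, ha2, hb2, hsm, hL.le]
  have hsum := Finset.sum_le_sum (s := Finset.univ) (fun i _ => key i)
  refine le_trans hsum (le_of_eq ?_)
  have einner : (inner ℝ ((1 / (n : ℝ)) • ∑ i, gradient (fs i) (x i)) (u - xb) : ℝ)
      = (1 / (n : ℝ)) * ∑ i, (inner ℝ (gradient (fs i) (x i)) (u - xb) : ℝ) := by
    rw [real_inner_smul_left, sum_inner]
  rw [einner]
  rw [Finset.sum_add_distrib, Finset.sum_add_distrib, ← Finset.mul_sum, ← Finset.mul_sum,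
    ← Finset.mul_sum, Finset.sum_sub_distrib, Finset.sum_sub_distrib]
  field_simp
  ring
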